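/- Let s ∈ ℝ, s ≠ 0. If Φ : ℝ → Mat_{2n}(ℝ) is differentiable with Φ'(t) = (δˢ Z_t)(δˢ Z_t)ᵀ J Φ(t) for all t and Φ(0) = I, then Ψ(t) := δ_s · Φ(t) · δ_{1/s} satisfies Ψ'(t) = s · Z_t Z_tᵀ J Ψ(t) for all t and Ψ(0) = I. -/

import Mathlib

open Matrix

noncomputable section

lemma aux_deriv_mul {m : Type*} [Fintype m] (L R : Matrix m m ℝ)
    {Φ : ℝ → Matrix m m ℝ} {D : Matrix m m ℝ} {t : ℝ}
    (h : ∀ i j, HasDerivAt (fun τ => Φ τ i j) (D i j) t) (i j : m) :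
    HasDerivAt (fun τ => (L * Φ τ * R) i j) ((L * D * R) i j) t := by
  have key : HasDerivAt (fun τ => ∑ x, ∑ a, L i a * Φ τ a x * R x j)
      (∑ x, ∑ a, L i a * D a x * R x j) t :=
    HasDerivAt.fun_sum (fun x _ => HasDerivAt.fun_sum (fun a _ =>
      ((h a x).const_mul _).mul_const _))
  simpa [Matrix.mul_apply, Finset.sum_mul] using key

/-- if `Φ` solves `Φ' = (δˢZ)(δˢZ)ᵀ J Φ`, `Φ(0) = I`, then
`Ψ(t) = δ_s Φ(t) δ_{1/s}` solves `Ψ' = s·ZZᵀJ Ψ`, `Ψ(0) = I`. -/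
theorem statement12 (n k : ℕ)
    (Z : ℝ → Matrix (Fin n ⊕ Fin n) (Fin k) ℝ) (hZ : Continuous Z)
    (s : ℝ) (hs : s ≠ 0)
    (J : Matrix (Fin n ⊕ Fin n) (Fin n ⊕ Fin n) ℝ)
    (hJ : J = Matrix.fromBlocks 0 (-1) 1 0)
    (δup δlow : ℝ → Matrix (Fin n ⊕ Fin n) (Fin n ⊕ Fin n) ℝ)
    (hδup : ∀ r, δup r = Matrix.fromBlocks (r • (1 : Matrix (Fin n) (Fin n) ℝ)) 0 0 1)
    (hδlow : ∀ r, δlow r = Matrix.fromBlocks 1 0 0 (r • (1 : Matrix (Fin n) (Fin n) ℝ)))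
    (Φ : ℝ → Matrix (Fin n ⊕ Fin n) (Fin n ⊕ Fin n) ℝ)
    (hΦ0 : Φ 0 = 1)
    (hΦd : ∀ t i j, HasDerivAt (fun τ => Φ τ i j)
      (((δup s * Z t) * (δup s * Z t)ᵀ * J * Φ t) i j) t)
    (Ψ : ℝ → Matrix (Fin n ⊕ Fin n) (Fin n ⊕ Fin n) ℝ)
    (hΨ : ∀ t, Ψ t = δlow s * Φ t * δlow (1 / s)) :
    Ψ 0 = 1 ∧
    ∀ t i j, HasDerivAt (fun τ => Ψ τ i j)
      ((s • (Z t * (Z t)ᵀ * J) * Ψ t) i j) t := by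
  have hup_symm : (δup s)ᵀ = δup s := by
    simp [hδup, Matrix.fromBlocks_transpose]
  have h1 : δlow s * δup s = s • (1 : Matrix (Fin n ⊕ Fin n) (Fin n ⊕ Fin n) ℝ) := by
    rw [hδlow, hδup, Matrix.fromBlocks_multiply, ← Matrix.fromBlocks_one,
      Matrix.fromBlocks_smul]
    simp
  have h2 : δup s * J = J * δlow s := by
    rw [hδup, hδlow, hJ, Matrix.fromBlocks_multiply, Matrix.fromBlocks_multiply]
    simp
  have h3 : δlow s * δlow (1 / s) = 1 := by
    rw [hδlow, hδlow, Matrix.fromBlocks_multiply, ← Matrix.fromBlocks_one]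
    simp [smul_smul, inv_mul_cancel₀ hs]
  have h1' : ∀ X, δlow s * (δup s * X) = s • X := fun X => by
    rw [← Matrix.mul_assoc, h1, Matrix.smul_mul, Matrix.one_mul]
  have h2' : ∀ X, δup s * (J * X) = J * (δlow s * X) := fun X => by
    rw [← Matrix.mul_assoc, h2, Matrix.mul_assoc]
  refine ⟨by rw [hΨ, hΦ0, Matrix.mul_one, h3], fun t i j => ?_⟩
  have key : δlow s * ((δup s * Z t) * (δup s * Z t)ᵀ * J * Φ t) * δlow (1 / s)
      = s • (Z t * (Z t)ᵀ * J) * Ψ t := by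
    rw [hΨ, Matrix.transpose_mul, hup_symm]
    simp only [Matrix.mul_assoc, Matrix.smul_mul]
    rw [h2', h1']
  have := aux_deriv_mul (δlow s) (δlow (1 / s)) (hΦd t) i j
  rw [key] at this
  have hfun : (fun τ => Ψ τ i j)
      = (fun τ => (δlow s * Φ τ * δlow (1 / s)) i j) := by
    funext τ; rw [hΨ]
  rw [hfun]
  exact this
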